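/- There exists a polynomial P in four variables with complex coefficients such that for all (x,y,z,w) ∈ ℂ⁴ with z ≠ 0, H(t; 1+(α₀−xz)z, y, 1/z, w) = P(x,y,z,w). In other words, the FST Hamiltonian H is a polynomial function of the coordinates (x₂^{[01]}, y₂^{[01]}, z₂^{[01]}, w₂^{[01]}) = (−((q₁−1)p₁−α₀)p₁, q₂, 1/p₁, p₂), whose inverse is (q₁,q₂,p₁,p₂) = (1+(α₀−xz)z, y, 1/z, w). -/

import Mathlib

/-- The Painlevé VI-type Hamiltonian `H_VI(a,b,c,d;q,p)`. -/
noncomputable def Hvi (t a b c d q p : ℂ) : ℂ :=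
  (q * (q - 1) * (q - t) * p ^ 2 -
      (a * (q - 1) * (q - t) + b * q * (q - t) + (c - 1) * q * (q - 1)) * p + d * q) /
    (t * (t - 1))

/-- The Hamiltonian of the fourth-order FST Painlevé system. -/
noncomputable def HFST (α₀ α₁ α₂ α₃ α₄ α₅ η t q₁ q₂ p₁ p₂ : ℂ) : ℂ :=
  Hvi t (α₃ + α₅ - η) α₀ (α₂ + α₄) (α₁ * η) q₁ p₁ +
    Hvi t (α₁ + α₅ - η) (α₀ + α₂) α₄ (α₃ * η) q₂ p₂ +
    (q₁ - 1) * (q₂ - t) * ((q₁ * p₁ + α₁) * p₂ + (q₂ * p₂ + α₃) * p₁) / (t * (t - 1))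

set_option maxHeartbeats 2000000 in
/-- The FST Hamiltonian `H` is a polynomial function of the coordinates
`(x₂^{[01]}, y₂^{[01]}, z₂^{[01]}, w₂^{[01]}) = (−((q₁−1)p₁−α₀)p₁, q₂, 1/p₁, p₂)`
resolving the accessible singularity `C₂^{(01)}`; the inverse change of variables is
`(q₁,q₂,p₁,p₂) = (1+(α₀−xz)z, y, 1/z, w)`. -/
theorem HFST_polynomial_in_C2_01_coordinates
    (t α₀ α₁ α₂ α₃ α₄ α₅ η : ℂ) (ht0 : t ≠ 0) (ht1 : t ≠ 1)
    (hsum : α₀ + α₁ + α₂ + α₃ + α₄ + α₅ = 1) :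
    ∃ P : MvPolynomial (Fin 4) ℂ, ∀ x y z w : ℂ, z ≠ 0 →
      HFST α₀ α₁ α₂ α₃ α₄ α₅ η t (1 + (α₀ - x * z) * z) y (1 / z) w =
        MvPolynomial.eval ![x, y, z, w] P := by
  classical
  have h5 : α₅ = 1 - α₀ - α₁ - α₂ - α₃ - α₄ := by linear_combination hsum
  subst h5
  open MvPolynomial in
  refine ⟨C ((1 : ℂ)/(t*(t-1))) * (C ((α₁*η + α₀*η + α₀*α₁ + α₀^2 + t*α₀ - (1)*t*α₀*η - (1)*t*α₀*α₄ - (1)*t*α₀*α₃ - (1)*t*α₀*α₂ - (1)*t*α₀*α₁ - (1)*t*α₀^2 : ℂ)) * (1) +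
    C (((-1)*t + t*η + t*α₄ + t*α₃ + t*α₂ : ℂ)) * ((X 3)) +
    C ((α₀*α₁*η + α₀^2*η + α₀^2*α₁ + α₀^3 : ℂ)) * ((X 2)) +
    C (((-1)*t*α₀*α₁ - (1)*t*α₀^2 : ℂ)) * ((X 2)*(X 3)) +
    C ((α₃*η + α₀*α₃ : ℂ)) * ((X 1)) +
    C (((-1)*η - (1)*α₃ - (1)*α₂ + t - (1)*t*η - (1)*t*α₄ - (1)*t*α₃ - (1)*t*α₀ : ℂ)) * ((X 1)*(X 3)) +
    C ((t : ℂ)) * ((X 1)*(X 3)^2) +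
    C ((α₀*α₁ + α₀^2 : ℂ)) * ((X 1)*(X 2)*(X 3)) +
    C ((η + α₃ + α₀ : ℂ)) * ((X 1)^2*(X 3)) +
    C (((-1) - (1)*t : ℂ)) * ((X 1)^2*(X 3)^2) +
    C (((1) : ℂ)) * ((X 1)^3*(X 3)^2) +
    C (((-1) + t : ℂ)) * ((X 0)) +
    C (((-1)*η - (1)*α₁ - (3)*α₀ - (1)*t + t*η + t*α₄ + t*α₃ + t*α₂ + t*α₁ + (2)*t*α₀ : ℂ)) * ((X 0)*(X 2)) +
    C ((t : ℂ)) * ((X 0)*(X 2)*(X 3)) +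
    C (((-1)*α₁*η - (2)*α₀*η - (2)*α₀*α₁ - (3)*α₀^2 : ℂ)) * ((X 0)*(X 2)^2) +
    C ((t*α₁ + (2)*t*α₀ : ℂ)) * ((X 0)*(X 2)^2*(X 3)) +
    C (((-1)*α₃ : ℂ)) * ((X 0)*(X 1)*(X 2)) +
    C (((-1) + t : ℂ)) * ((X 0)*(X 1)*(X 2)*(X 3)) +
    C (((-1)*α₁ - (2)*α₀ : ℂ)) * ((X 0)*(X 1)*(X 2)^2*(X 3)) +
    C (((-1) : ℂ)) * ((X 0)*(X 1)^2*(X 2)*(X 3)) +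
    C (((2) - (1)*t : ℂ)) * ((X 0)^2*(X 2)^2) +
    C ((η + α₁ + (3)*α₀ : ℂ)) * ((X 0)^2*(X 2)^3) +
    C (((-1)*t : ℂ)) * ((X 0)^2*(X 2)^3*(X 3)) +
    C (((1) : ℂ)) * ((X 0)^2*(X 1)*(X 2)^3*(X 3)) +
    C (((-1) : ℂ)) * ((X 0)^3*(X 2)^4)), ?_⟩
  intro x y z w hz
  have ht1' : t - 1 ≠ 0 := sub_ne_zero.mpr ht1
  simp only [map_add, map_mul, map_pow, map_one, MvPolynomial.eval_C, MvPolynomial.eval_X,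
    Matrix.cons_val_zero, Matrix.cons_val_one, Matrix.head_cons, Matrix.cons_val_two,
    Matrix.tail_cons, Matrix.cons_val_three]
  have htt : t * (t - 1) ≠ 0 := mul_ne_zero ht0 ht1'
  unfold HFST Hvi
  rw [← add_div, ← add_div, div_eq_iff htt]
  field_simp
  ring
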